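/- There exist absolute constants C₂ > 0 and C₃ > 0 such that for every integer n ≥ 2, every β ∈ {1,2,4} with d = βn², and every real p ≥ 1, writing R = Γ(1 + d/p)/Γ(1 + (d+2)/p), one has (C₂/(p(p+d))) · R² ≤ R² − Γ(1 + d/p)/Γ(1 + (d+4)/p) ≤ (C₃/(p·d)) · R². -/

import Mathlib

open Real Filter Finset Topology

private lemma prod_one_add_ge (u : ℕ → ℝ) (hu : ∀ k, 0 ≤ u k) (n : ℕ) :
    1 + ∑ k ∈ range n, u k ≤ ∏ k ∈ range n, (1 + u k) := by
  induction n with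
  | zero => simp
  | succ n ih =>
    rw [sum_range_succ, prod_range_succ]
    have h1 : 0 ≤ ∑ k ∈ range n, u k := sum_nonneg fun k _ => hu k
    nlinarith [hu n]

private lemma gamma_Q (a h : ℝ) (ha : 1 ≤ a) (hh : 0 < h) :
    (1 + h^2/(a+2*h)) * Gamma (a+h)^2 ≤ Gamma a * Gamma (a+2*h) ∧
      Gamma a * Gamma (a+2*h) ≤ Real.exp (2*h^2/a) * Gamma (a+h)^2 := by
  have ha0 : 0 < a := lt_of_lt_of_le one_pos ha
  set b : ℝ := a + 2*h with hb
  have hb0 : 0 < b := by rw [hb]; positivity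
  have hb1 : 1 ≤ b := by rw [hb]; nlinarith
  set u : ℕ → ℝ := fun k => h^2/((a+k)*(b+k)) with hu
  have hak : ∀ k : ℕ, (0:ℝ) < a + k := fun k => by positivity
  have hbk : ∀ k : ℕ, (0:ℝ) < b + k := fun k => by positivity
  have hu0 : ∀ k, 0 ≤ u k := fun k =>
    le_of_lt (div_pos (pow_pos hh 2) (mul_pos (hak k) (hbk k)))
  set P : ℕ → ℝ := fun n => ∏ k ∈ range n, (1 + u k) with hP
  -- the key identity
  have key : ∀ n : ℕ, Real.GammaSeq a n * Real.GammaSeq b n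
      = Real.GammaSeq (a+h) n ^ 2 * P (n+1) := by
    intro n
    have hA : (0:ℝ) < ∏ j ∈ range (n+1), (a + j) := prod_pos fun j _ => hak j
    have hB : (0:ℝ) < ∏ j ∈ range (n+1), (a + h + j) :=
      prod_pos fun j _ => by positivity
    have hC : (0:ℝ) < ∏ j ∈ range (n+1), (b + j) := prod_pos fun j _ => hbk j
    have hfac : ∀ k : ℕ, 1 + u k = (a+h+k)^2/((a+k)*(b+k)) := by
      intro k
      rw [hu, hb]
      field_simp
      ring
    have hPform : P (n+1) = (∏ j ∈ range (n+1), (a+h+j))^2 /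
        ((∏ j ∈ range (n+1), (a + j)) * ∏ j ∈ range (n+1), (b + j)) := by
      rw [hP]
      simp only [hfac]
      rw [prod_div_distrib, prod_mul_distrib, prod_pow]
    have hn2 : (n:ℝ)^a * (n:ℝ)^b = ((n:ℝ)^(a+h))^2 := by
      rcases Nat.eq_zero_or_pos n with h0 | h0
      · subst h0
        simp only [Nat.cast_zero]
        rw [Real.zero_rpow ha0.ne', Real.zero_rpow (by positivity : a + h ≠ 0)]
        ring
      · have hn0 : (0:ℝ) < n := by exact_mod_cast h0
        rw [sq, ← Real.rpow_add hn0, ← Real.rpow_add hn0, hb]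
        ring_nf
    rw [Real.GammaSeq, Real.GammaSeq, Real.GammaSeq, hPform]
    field_simp
    exact hn2
  have hy2 : (0:ℝ) < Gamma (a+h)^2 := pow_pos (Gamma_pos_of_pos (by positivity)) 2
  have T : Tendsto (fun n => P (n+1)) atTop (𝓝 (Gamma a * Gamma b / Gamma (a+h)^2)) := by
    have t := ((Real.GammaSeq_tendsto_Gamma a).mul (Real.GammaSeq_tendsto_Gamma b)).div
      ((Real.GammaSeq_tendsto_Gamma (a+h)).pow 2) hy2.ne'
    apply t.congr'
    filter_upwards [eventually_ge_atTop 1] with n hn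
    have hn0 : (0:ℝ) < n := by exact_mod_cast hn
    have hBpos : (0:ℝ) < Real.GammaSeq (a+h) n := by
      rw [Real.GammaSeq]
      apply div_pos
      · exact mul_pos (Real.rpow_pos_of_pos hn0 _) (by exact_mod_cast n.factorial_pos)
      · exact prod_pos fun j _ => by positivity
    simp only [Pi.div_apply, Pi.mul_apply]
    rw [key n]
    field_simp
  -- sum bounds
  have sumUB : ∀ n, ∑ k ∈ range n, u k ≤ 2*h^2/a := by
    intro n
    cases n with
    | zero => simp; positivity
    | succ m =>
      rw [Finset.sum_range_succ']
      have h1 : u 0 ≤ h^2/a := by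
        rw [hu]
        simp only [Nat.cast_zero, add_zero]
        rw [div_le_div_iff₀ (mul_pos ha0 hb0) ha0]
        nlinarith [mul_nonneg (mul_nonneg (sq_nonneg h) ha0.le) (sub_nonneg.mpr hb1)]
      have h2 : ∑ k ∈ range m, u (k+1) ≤ ∑ k ∈ range m, (h^2/(a+k) - h^2/(a+(k+1))) := by
        apply sum_le_sum
        intro k _
        have e : h^2/(a+(k:ℝ)) - h^2/(a+((k:ℝ)+1)) = h^2/((a+k)*(a+(k+1))) := by
          rw [div_sub_div _ _ (hak k).ne' (by positivity : (a+((k:ℝ)+1)) ≠ 0)]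
          ring_nf
        rw [hu]
        push_cast
        rw [e, div_le_div_iff₀ (by positivity) (by positivity)]
        have h6 : (0:ℝ) < a + (k:ℝ) + 1 := by positivity
        have h7 : (0:ℝ) ≤ (b + ((k:ℝ)+1)) - (a + (k:ℝ)) := by nlinarith
        nlinarith [mul_nonneg (mul_nonneg (sq_nonneg h) h6.le) h7]
      have h3 : ∑ k ∈ range m, (h^2/(a+(k:ℝ)) - h^2/(a+((k:ℝ)+1))) = h^2/a - h^2/(a+m) := by
        have := Finset.sum_range_sub' (fun k : ℕ => h^2/(a+(k:ℝ))) m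
        simp only [Nat.cast_zero, add_zero] at this
        rw [← this]
        apply sum_congr rfl
        intro k _
        push_cast
        ring_nf
      have h4 : 0 ≤ h^2/(a+(m:ℝ)) := by positivity
      push_cast at h2 ⊢
      rw [h3] at h2
      rw [show 2*h^2/a = h^2/a + h^2/a by ring]
      linarith
  have sumLB : ∀ n : ℕ, h^2/b - h^2/(b+n) ≤ ∑ k ∈ range n, u k := by
    intro n
    have h3 : ∑ k ∈ range n, (h^2/(b+(k:ℝ)) - h^2/(b+((k:ℝ)+1))) = h^2/b - h^2/(b+n) := by
      have := Finset.sum_range_sub' (fun k : ℕ => h^2/(b+(k:ℝ))) n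
      simp only [Nat.cast_zero, add_zero] at this
      rw [← this]
      apply sum_congr rfl
      intro k _
      push_cast
      ring_nf
    rw [← h3]
    apply sum_le_sum
    intro k _
    have e : h^2/(b+(k:ℝ)) - h^2/(b+((k:ℝ)+1)) = h^2/((b+k)*(b+(k+1))) := by
      rw [div_sub_div _ _ (hbk k).ne' (by positivity : (b+((k:ℝ)+1)) ≠ 0)]
      ring_nf
    rw [e, hu]
    rw [div_le_div_iff₀ (by positivity) (by positivity)]
    have h5 : (0:ℝ) ≤ (b + ((k:ℝ)+1)) - (a + (k:ℝ)) := by nlinarith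
    nlinarith [mul_nonneg (mul_nonneg (sq_nonneg h) (hbk k).le) h5]
  have PUB : ∀ n, P n ≤ Real.exp (2*h^2/a) := by
    intro n
    calc P n ≤ ∏ k ∈ range n, Real.exp (u k) := by
          apply Finset.prod_le_prod
          · intro k _; linarith [hu0 k]
          · intro k _; linarith [Real.add_one_le_exp (u k)]
      _ = Real.exp (∑ k ∈ range n, u k) := (Real.exp_sum _ _).symm
      _ ≤ Real.exp (2*h^2/a) := Real.exp_le_exp.mpr (sumUB n)
  have PLB : ∀ n : ℕ, 1 + (h^2/b - h^2/(b+n)) ≤ P n := by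
    intro n
    have := prod_one_add_ge u hu0 n
    have := sumLB n
    rw [hP]
    linarith
  have QUB : Gamma a * Gamma b / Gamma (a+h)^2 ≤ Real.exp (2*h^2/a) :=
    le_of_tendsto T (Eventually.of_forall fun n => PUB (n+1))
  have QLB : 1 + h^2/b ≤ Gamma a * Gamma b / Gamma (a+h)^2 := by
    have lim2 : Tendsto (fun n : ℕ => 1 + (h^2/b - h^2/(b+((n:ℝ)+1)))) atTop
        (𝓝 (1 + (h^2/b - 0))) := by
      apply Tendsto.const_add
      apply Tendsto.const_sub
      have hbtop : Tendsto (fun n : ℕ => b + ((n:ℝ)+1)) atTop atTop :=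
        tendsto_atTop_add_const_left _ b
          (tendsto_atTop_add_const_right _ 1 tendsto_natCast_atTop_atTop)
      have := hbtop.inv_tendsto_atTop
      simp only [div_eq_mul_inv]
      simpa using tendsto_const_nhds.mul this
    rw [show (1:ℝ) + h^2/b = 1 + (h^2/b - 0) by ring]
    apply le_of_tendsto_of_tendsto' lim2 T
    intro n
    have := PLB (n+1)
    push_cast at this
    exact this
  constructor
  · have := (le_div_iff₀ hy2).mp QLB
    rw [hb] at this
    exact this
  · have := (div_le_iff₀ hy2).mp QUB
    rw [hb] at this
    exact this


set_option maxHeartbeats 1000000 in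
/-- There are absolute constants `C₂, C₃ > 0` such that for every `n ≥ 2`,
every `β ∈ {1,2,4}` with `d = βn²` and every `p ≥ 1`, writing
`R = Γ(1 + d/p)/Γ(1 + (d+2)/p)`, one has
`(C₂/(p(p+d))) R² ≤ R² − Γ(1 + d/p)/Γ(1 + (d+4)/p) ≤ (C₃/(p d)) R²`. -/
theorem statement3 :
    ∃ C₂ C₃ : ℝ, 0 < C₂ ∧ 0 < C₃ ∧
      ∀ n : ℕ, 2 ≤ n → ∀ β : ℕ, (β = 1 ∨ β = 2 ∨ β = 4) → ∀ p : ℝ, 1 ≤ p →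
        C₂ / (p * (p + (β : ℝ) * (n : ℝ) ^ 2)) *
            (Real.Gamma (1 + (β : ℝ) * (n : ℝ) ^ 2 / p) /
              Real.Gamma (1 + ((β : ℝ) * (n : ℝ) ^ 2 + 2) / p)) ^ 2 ≤
          (Real.Gamma (1 + (β : ℝ) * (n : ℝ) ^ 2 / p) /
              Real.Gamma (1 + ((β : ℝ) * (n : ℝ) ^ 2 + 2) / p)) ^ 2 -
            Real.Gamma (1 + (β : ℝ) * (n : ℝ) ^ 2 / p) /
              Real.Gamma (1 + ((β : ℝ) * (n : ℝ) ^ 2 + 4) / p) ∧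
        (Real.Gamma (1 + (β : ℝ) * (n : ℝ) ^ 2 / p) /
              Real.Gamma (1 + ((β : ℝ) * (n : ℝ) ^ 2 + 2) / p)) ^ 2 -
            Real.Gamma (1 + (β : ℝ) * (n : ℝ) ^ 2 / p) /
              Real.Gamma (1 + ((β : ℝ) * (n : ℝ) ^ 2 + 4) / p) ≤
          C₃ / (p * ((β : ℝ) * (n : ℝ) ^ 2)) *
            (Real.Gamma (1 + (β : ℝ) * (n : ℝ) ^ 2 / p) /
              Real.Gamma (1 + ((β : ℝ) * (n : ℝ) ^ 2 + 2) / p)) ^ 2 := by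
  refine ⟨1/4, 8, by norm_num, by norm_num, ?_⟩
  intro n hn β hβ p hp
  have hp0 : (0:ℝ) < p := lt_of_lt_of_le one_pos hp
  set d : ℝ := (β:ℝ) * (n:ℝ)^2 with hd
  have hd4 : (4:ℝ) ≤ d := by
    have hn2 : (2:ℝ) ≤ (n:ℝ) := by exact_mod_cast hn
    have hβ1 : (1:ℝ) ≤ (β:ℝ) := by rcases hβ with h|h|h <;> simp [h] <;> norm_num
    rw [hd]; nlinarith
  have hd0 : (0:ℝ) < d := lt_of_lt_of_le (by norm_num) hd4
  have e1 : (1:ℝ) + (d+2)/p = 1 + d/p + 2/p := by ring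
  have e2 : (1:ℝ) + (d+4)/p = 1 + d/p + 2*(2/p) := by ring
  rw [e1, e2]
  obtain ⟨L, U⟩ := gamma_Q (1 + d/p) (2/p)
    (le_add_of_nonneg_right (by positivity)) (by positivity)
  set x := Gamma (1 + d/p) with hx
  set y := Gamma (1 + d/p + 2/p) with hy
  set z := Gamma (1 + d/p + 2*(2/p)) with hz
  have hx0 : 0 < x := Gamma_pos_of_pos (by positivity)
  have hy0 : 0 < y := Gamma_pos_of_pos (by positivity)
  have hz0 : 0 < z := Gamma_pos_of_pos (by positivity)
  have hy2 : (0:ℝ) < y^2 := pow_pos hy0 2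
  set Q : ℝ := x * z / y^2 with hQ
  have hQ1 : 1 + (2/p)^2/(1 + d/p + 2*(2/p)) ≤ Q := by
    rw [hQ, le_div_iff₀ hy2]; exact L
  have hQ2 : Q ≤ Real.exp (2*(2/p)^2/(1 + d/p)) := by
    rw [hQ, div_le_iff₀ hy2]; exact U
  -- numeric facts
  have eL : 2*(2/p)^2/(1 + d/p) = 8/(p*(p+d)) := by
    rw [div_eq_div_iff (by positivity) (by positivity)]
    field_simp
    ring
  have htb : 2*(2/p)^2/(1 + d/p) ≤ 8/(p*d) := by
    rw [eL, div_le_div_iff₀ (by positivity) (by positivity)]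
    nlinarith
  have ht2 : 2*(2/p)^2/(1 + d/p) ≤ 2 := by
    refine htb.trans ?_
    rw [div_le_iff₀ (by positivity)]
    nlinarith
  have hE8 : Real.exp (2*(2/p)^2/(1 + d/p)) ≤ 8 := by
    have h1 : Real.exp (2*(2/p)^2/(1 + d/p)) ≤ Real.exp 2 := Real.exp_le_exp.mpr ht2
    have h2 : Real.exp 2 ≤ 8 := by
      rw [show (2:ℝ) = 1 + 1 by norm_num, Real.exp_add]
      nlinarith [Real.exp_one_lt_d9, Real.exp_pos 1]
    linarith
  have hQ8 : Q ≤ 8 := hQ2.trans hE8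
  have hQ1' : 1 + 2/(p*(p+d)) ≤ Q := by
    refine le_trans ?_ hQ1
    have eQ : (2/p)^2/(1 + d/p + 2*(2/p)) = 4/(p*(p+d+4)) := by
      rw [div_eq_div_iff (by positivity) (by positivity)]
      field_simp
      ring
    have : 2/(p*(p+d)) ≤ (2/p)^2/(1 + d/p + 2*(2/p)) := by
      rw [eQ, div_le_div_iff₀ (by positivity) (by positivity)]
      nlinarith [mul_nonneg hp0.le (by linarith : (0:ℝ) ≤ p + d - 4)]
    linarith
  have hQ0 : (0:ℝ) < Q := lt_of_lt_of_le (by positivity) hQ1'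
  have key : (x/y)^2 - x/z = (1 - 1/Q)*(x/y)^2 := by
    rw [hQ]
    field_simp [hx0.ne', hy0.ne', hz0.ne']
  constructor
  · rw [key]
    apply mul_le_mul_of_nonneg_right _ (sq_nonneg _)
    have e3 : 1 - 1/Q = (Q-1)/Q := by field_simp
    rw [e3]
    have hpos : (0:ℝ) < 2/(p*(p+d)) := by positivity
    calc (1/4)/(p*(p+d)) = (2/(p*(p+d)))/8 := by ring
      _ ≤ (Q-1)/Q := by
          apply div_le_div₀ (by linarith) (by linarith) hQ0 hQ8
  · rw [key]
    apply mul_le_mul_of_nonneg_right _ (sq_nonneg _)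
    have h1 : 1/Real.exp (2*(2/p)^2/(1 + d/p)) ≤ 1/Q :=
      one_div_le_one_div_of_le hQ0 hQ2
    have h2 : (1:ℝ) - 1/Real.exp (2*(2/p)^2/(1 + d/p)) ≤ 2*(2/p)^2/(1 + d/p) := by
      rw [one_div, ← Real.exp_neg]
      nlinarith [Real.add_one_le_exp (-(2*(2/p)^2/(1 + d/p)))]
    linarith
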